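/- Let E be a Weierstrass elliptic curve y² = x³ + ax + b over a field K with char(K) > 3 and 4a³+27b² ≠ 0, with the chord-tangent addition. For all A, B ∈ E: (A + B) + (A + B) = A + (B + (A + B)). -/

import Mathlib

set_option maxHeartbeats 1000000


/-- Points of the elliptic curve: the point at infinity `zero` and affine points. -/
inductive Pt (K : Type*) where
  | zero : Pt K
  | some (x y : K) : Pt K

namespace Pt

variable {K : Type*} [Field K]

/-- Negation: reflection about the x-axis. -/
def neg : Pt K → Pt K
  | .zero => .zero
  | .some x y => .some x (-y)

open scoped Classical in
/-- The chord-tangent addition on the curve `y² = x³ + a x + b`. -/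
noncomputable def add (a : K) : Pt K → Pt K → Pt K
  | .zero, P => P
  | P, .zero => P
  | .some x₁ y₁, .some x₂ y₂ =>
    if x₁ = x₂ ∧ y₁ = -y₂ then .zero
    else
      let α := if x₁ = x₂ then (3 * x₁ ^ 2 + a) / (2 * y₁) else (y₁ - y₂) / (x₁ - x₂)
      let x₃ := α ^ 2 - x₁ - x₂
      .some x₃ (-y₁ + α * (x₁ - x₃))

end Pt

/-- Membership in the affine Weierstrass curve (the point at infinity belongs). -/
def OnCurve {K : Type*} [Field K] (a b : K) : Pt K → Prop
  | .zero => True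
  | .some x y => y ^ 2 = x ^ 3 + a * x + b

namespace AssocAux

open WeierstrassCurve

open scoped Classical

variable {K : Type*} [Field K]

/-- The mathlib Weierstrass curve for `y² = x³ + a x + b`. -/
def W (a b : K) : WeierstrassCurve.Affine K := ⟨0, 0, 0, a, b⟩

lemma W_Δ (a b : K) : (W a b).Δ = -16 * (4 * a ^ 3 + 27 * b ^ 2) := by
  simp [W, WeierstrassCurve.Δ, b₂, b₄, b₆, b₈]; ring

lemma negY_eq (a b : K) (x y : K) : (W a b).negY x y = -y := by
  simp [Affine.negY, W]

lemma equation_iff' (a b x y : K) :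
    (W a b).Equation x y ↔ y ^ 2 = x ^ 3 + a * x + b := by
  rw [Affine.equation_iff]; simp only [W]
  constructor <;> intro h <;> linear_combination h

@[simp] lemma W_a₁ (a b : K) : (W a b).a₁ = 0 := rfl
@[simp] lemma W_a₂ (a b : K) : (W a b).a₂ = 0 := rfl
@[simp] lemma W_a₃ (a b : K) : (W a b).a₃ = 0 := rfl
@[simp] lemma W_a₄ (a b : K) : (W a b).a₄ = a := rfl
@[simp] lemma W_a₆ (a b : K) : (W a b).a₆ = b := rfl

variable (h2 : (2 : K) ≠ 0) (a b : K) (hab : 4 * a ^ 3 + 27 * b ^ 2 ≠ 0)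

include h2 hab in
lemma ns {x y : K} (h : y ^ 2 = x ^ 3 + a * x + b) : (W a b).Nonsingular x y := by
  refine ((W a b).equation_iff_nonsingular_of_Δ_ne_zero ?_).mp ((equation_iff' a b x y).mpr h)
  rw [W_Δ]
  refine mul_ne_zero ?_ hab
  have : (16 : K) = 2 ^ 4 := by norm_num
  simpa [this] using pow_ne_zero 4 h2

/-- Forget the nonsingularity proof. -/
def proj : (W a b).Point → Pt K
  | WeierstrassCurve.Affine.Point.zero => .zero
  | @WeierstrassCurve.Affine.Point.some _ _ _ x y _ => .some x y

lemma proj_add (P Q : (W a b).Point) :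
    proj a b (P + Q) = Pt.add a (proj a b P) (proj a b Q) := by
  cases P with
  | zero => cases Q with
    | zero => rfl
    | some h => rw [show ((.zero : (W a b).Point) + _) = _ from zero_add _]; rfl
  | @some x₁ y₁ h₁ =>
    cases Q with
    | zero => rw [show (_ + (.zero : (W a b).Point)) = _ from add_zero _]; rfl
    | @some x₂ y₂ h₂ =>
      by_cases hxy : x₁ = x₂ ∧ y₁ = -y₂
      · rw [Affine.Point.add_of_Y_eq hxy.1 (by rw [negY_eq]; exact hxy.2)]
        simp only [proj, Pt.add]
        rw [if_pos hxy]
      · have hxy' : x₁ = x₂ → y₁ ≠ (W a b).negY x₂ y₂ := by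
          rw [negY_eq]; intro hx hy; exact hxy ⟨hx, hy⟩
        rw [Affine.Point.add_some (by rw [negY_eq]; exact hxy)]
        simp only [proj, Pt.add]
        rw [if_neg hxy]
        by_cases hx : x₁ = x₂
        · have hslope : (W a b).slope x₁ x₂ y₁ y₂ = (3 * x₁ ^ 2 + a) / (2 * y₁) := by
            rw [Affine.slope_of_Y_ne hx (hxy' hx)]
            simp only [negY_eq, W_a₁, W_a₂, W_a₄]
            rw [show y₁ - -y₁ = 2 * y₁ by ring]
            ring_nf
          rw [if_pos hx]
          refine congrArg₂ _ ?_ ?_ <;>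
            simp only [Affine.addX, Affine.addY, Affine.negAddY, negY_eq, hslope,
              W_a₁, W_a₂] <;> ring
        · have hslope : (W a b).slope x₁ x₂ y₁ y₂ = (y₁ - y₂) / (x₁ - x₂) :=
            Affine.slope_of_X_ne hx
          rw [if_neg hx]
          refine congrArg₂ _ ?_ ?_ <;>
            simp only [Affine.addX, Affine.addY, Affine.negAddY, negY_eq, hslope,
              W_a₁, W_a₂] <;> ring

end AssocAux

theorem assoc_sum_case {K : Type*} [Field K] (h2 : (2 : K) ≠ 0) (h3 : (3 : K) ≠ 0)
    (a b : K) (hab : 4 * a ^ 3 + 27 * b ^ 2 ≠ 0)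
    (A B : Pt K) (hA : OnCurve a b A) (hB : OnCurve a b B) :
    Pt.add a (Pt.add a A B) (Pt.add a A B)
      = Pt.add a A (Pt.add a B (Pt.add a A B)) := by
  open AssocAux in
  -- lift A and B to mathlib points
  have liftP : ∀ P : Pt K, OnCurve a b P → ∃ P' : (W a b).Point, proj a b P' = P := by
    intro P hP
    cases P with
    | zero => exact ⟨.zero, rfl⟩
    | some x y => exact ⟨.some _ _ (ns h2 a b hab hP), rfl⟩
  obtain ⟨A', hA'⟩ := liftP A hA
  obtain ⟨B', hB'⟩ := liftP B hB
  have key := proj_add (K := K) a b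
  simp only [← hA', ← hB', ← key]
  exact congrArg _ (by classical exact add_assoc _ _ _)
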